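/- Let w be an infinite word over the finite alphabet {0, 1, ..., k-1} for some k ≥ 1. If there exist a vector v ∈ ℚ^k and a positive integer M such that the L∞ distance μ(ψ(w[1..i]), i·v) ≤ M for all i ≥ 0, then w contains an abelian α-power for every integer α ≥ 2. -/

import Mathlib

/-- If an infinite word `w` over `{0, …, k-1}` has Parikh vectors of
prefixes staying within `L^∞` distance `M` of `i • v` for a rational vector `v`, then
`w` contains an abelian `α`-power for every `α ≥ 2`. -/
theorem stmt_0 (k : ℕ) (hk : 1 ≤ k) (w : ℕ → Fin k) (v : Fin k → ℚ) (M : ℕ) (hM : 0 < M)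
    (h : ∀ i : ℕ, ∀ a : Fin k,
      |((((Finset.range i).filter (fun t => w t = a)).card : ℚ) - (i : ℚ) * v a)| ≤ (M : ℚ)) :
    ∀ α : ℕ, 2 ≤ α → ∃ n d : ℕ, 1 ≤ d ∧
      ∀ i : ℕ, i < α → ∀ a : Fin k,
        ((Finset.Ico (n + i * d) (n + (i + 1) * d)).filter (fun t => w t = a)).card =
          ((Finset.Ico n (n + d)).filter (fun t => w t = a)).card := by
  intro α hα
  classical
  -- common denominator
  set q : ℕ := ∏ a : Fin k, (v a).den with hq
  have hqpos : 0 < q := Finset.prod_pos (fun a _ => (v a).pos)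
  -- integer numerators
  set z : Fin k → ℤ := fun a => (v a).num * ((q / (v a).den : ℕ) : ℤ) with hz
  have hzq : ∀ a, (z a : ℚ) = v a * q := by
    intro a
    have hdvd : (v a).den ∣ q := Finset.dvd_prod_of_mem _ (Finset.mem_univ a)
    have hden : ((v a).den : ℚ) ≠ 0 := Nat.cast_ne_zero.mpr (v a).den_nz
    have hnum : ((v a).num : ℚ) = v a * ((v a).den : ℚ) :=
      (div_eq_iff hden).mp (Rat.num_div_den (v a))
    simp only [hz]
    push_cast [Nat.cast_div hdvd hden, Int.cast_div (Int.natCast_dvd_natCast.mpr hdvd) (by exact_mod_cast hden : (((v a).den : ℤ) : ℚ) ≠ 0)]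
    field_simp
    rw [hnum]
    ring
  -- prefix counts
  set cnt : ℕ → Fin k → ℕ := fun i a => ((Finset.range i).filter (fun t => w t = a)).card
    with hcnt
  set g : ℕ → Fin k → ℤ := fun i a => (q : ℤ) * cnt i a - (i : ℤ) * z a with hg
  have hgbound : ∀ i a, |g i a| ≤ (q : ℤ) * M := by
    intro i a
    have : (g i a : ℚ) = (q : ℚ) * ((cnt i a : ℚ) - (i : ℚ) * v a) := by
      push_cast [hg, hzq a]
      ring
    have h2 : |(g i a : ℚ)| ≤ (q : ℚ) * M := by
      rw [this, abs_mul, abs_of_nonneg (by positivity : (0:ℚ) ≤ (q:ℚ))]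
      exact mul_le_mul_of_nonneg_left (h i a) (by positivity)
    exact_mod_cast h2
  -- coloring into a finite type
  set N : ℕ := 2 * q * M + 1 with hN
  haveI : NeZero N := ⟨by omega⟩
  set C : ℕ → (Fin k → ZMod N) := fun i a => ((g i a : ℤ) : ZMod N) with hC
  obtain ⟨d, hdpos, n, c, hmono⟩ :=
    Combinatorics.exists_mono_homothetic_copy (Finset.range (α + 1)) C
  -- from the monochromatic copy, deduce equality of `g` values
  have hgeq : ∀ s ∈ Finset.range (α + 1), ∀ s' ∈ Finset.range (α + 1), ∀ a,
      g (d * s + n) a = g (d * s' + n) a := by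
    intro s hs s' hs' a
    have e1 := hmono s hs
    have e2 := hmono s' hs'
    have e : C (d * s + n) a = C (d * s' + n) a := by
      rw [smul_eq_mul] at e1 e2
      rw [show C (d * s + n) a = c a from congrFun e1 a,
        show C (d * s' + n) a = c a from congrFun e2 a]
    simp only [hC] at e
    have hdv : (N : ℤ) ∣ g (d * s + n) a - g (d * s' + n) a :=
      Int.ModEq.dvd ((ZMod.intCast_eq_intCast_iff _ _ _).mp e).symm
    by_contra hne
    have hne' : g (d * s + n) a - g (d * s' + n) a ≠ 0 := sub_ne_zero.mpr hne
    have hle : (N : ℤ) ≤ |g (d * s + n) a - g (d * s' + n) a| :=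
      Int.le_of_dvd (abs_pos.mpr hne') ((dvd_abs _ _).mpr hdv)
    have b1 := hgbound (d * s + n) a
    have b2 := hgbound (d * s' + n) a
    have htri := abs_sub (g (d * s + n) a) (g (d * s' + n) a)
    have hNZ : (N : ℤ) = 2 * (q : ℤ) * (M : ℤ) + 1 := by rw [hN]; push_cast; ring
    linarith
  refine ⟨n, d, hdpos, ?_⟩
  intro i hi a
  -- counting lemma
  have hcount : ∀ m m' : ℕ, m ≤ m' →
      cnt m a + ((Finset.Ico m m').filter (fun t => w t = a)).card = cnt m' a := by
    intro m m' hmm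
    have hsplit : Finset.Ico 0 m ∪ Finset.Ico m m' = Finset.Ico 0 m' :=
      Finset.Ico_union_Ico_eq_Ico (Nat.zero_le m) hmm
    have hdisj : Disjoint (Finset.Ico 0 m) (Finset.Ico m m') :=
      Finset.Ico_disjoint_Ico_consecutive 0 m m'
    simp only [hcnt, Finset.range_eq_Ico]
    rw [← hsplit, Finset.filter_union,
      Finset.card_union_of_disjoint (Finset.disjoint_filter_filter hdisj)]
  -- express both block counts via g
  have key : ∀ s : ℕ, s + 1 ≤ α →
      (q : ℤ) * (((Finset.Ico (d * s + n) (d * (s + 1) + n)).filter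
        (fun t => w t = a)).card : ℤ) = (d : ℤ) * z a := by
    intro s hs
    have hle : d * s + n ≤ d * (s + 1) + n := by nlinarith
    have hc := hcount (d * s + n) (d * (s + 1) + n) hle
    have hg1 := hgeq s (by simp; omega) (s + 1) (by simp; omega) a
    simp only [hg] at hg1
    have hcZ : ((cnt (d * (s + 1) + n) a : ℤ)) = (cnt (d * s + n) a : ℤ) +
        (((Finset.Ico (d * s + n) (d * (s + 1) + n)).filter
          (fun t => w t = a)).card : ℤ) := by exact_mod_cast hc.symm
    have : (q : ℤ) * (((Finset.Ico (d * s + n) (d * (s + 1) + n)).filter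
        (fun t => w t = a)).card : ℤ) =
        ((d * (s + 1) + n : ℕ) : ℤ) * z a - ((d * s + n : ℕ) : ℤ) * z a := by
      nlinarith [hg1, hcZ]
    rw [this]
    push_cast
    ring
  have k1 := key i (by omega)
  have k0 := key 0 (by omega)
  have : (q : ℤ) * (((Finset.Ico (d * i + n) (d * (i + 1) + n)).filter
      (fun t => w t = a)).card : ℤ) =
      (q : ℤ) * (((Finset.Ico (d * 0 + n) (d * (0 + 1) + n)).filter
        (fun t => w t = a)).card : ℤ) := by rw [k1, k0]
  have hqne : (q : ℤ) ≠ 0 := by exact_mod_cast hqpos.ne'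
  have hcards : ((Finset.Ico (d * i + n) (d * (i + 1) + n)).filter
      (fun t => w t = a)).card =
      ((Finset.Ico (d * 0 + n) (d * (0 + 1) + n)).filter (fun t => w t = a)).card := by
    exact_mod_cast mul_left_cancel₀ hqne this
  have e3 : d * 0 + n = n := by ring
  have e4 : d * (0 + 1) + n = n + d := by ring
  rw [e3, e4] at hcards
  have e1 : n + i * d = d * i + n := by ring
  have e2 : n + (i + 1) * d = d * (i + 1) + n := by ring
  rw [e1, e2]
  exact hcards
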